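/- Suppose a is eventually periodic, i.e., there exist ℓ ≥ 1 and k ≥ 0 with a(j+ℓ) = a(j) for all j > k. Let r : ℕ → ℤ be any sequence satisfying the recurrence r(n) = a(n)·r(n−1) + r(n−2) for all n ≥ 2, with arbitrary initial values r(0), r(1) ∈ ℤ. Then the generating function ∑_{n≥0} r(n)·zⁿ ∈ ℤ[[z]] is rational: there exist polynomials u, v ∈ ℤ[z] with v having constant coefficient 1 such that v · ∑_{n≥0} r(n)·zⁿ = u in ℤ[[z]]. -/

import Mathlib

open Matrix

/-- local transfer matrix -/
noncomputable def Mmat (a : ℕ → ℕ) (n : ℕ) : Matrix (Fin 2) (Fin 2) ℤ := !![(a n : ℤ), 1; 1, 0]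

/-- product of transfer matrices `M (n+m) * ⋯ * M (n+1)` -/
noncomputable def Pmat (a : ℕ → ℕ) (n : ℕ) : ℕ → Matrix (Fin 2) (Fin 2) ℤ
  | 0 => 1
  | m+1 => Mmat a (n+m+1) * Pmat a n m

lemma cayley2 (A : Matrix (Fin 2) (Fin 2) ℤ) :
    A * A = A.trace • A - A.det • (1 : Matrix (Fin 2) (Fin 2) ℤ) := by
  ext i j
  simp only [Matrix.sub_apply, Matrix.smul_apply, Matrix.mul_apply, Fin.sum_univ_two,
    smul_eq_mul, Matrix.trace_fin_two, Matrix.det_fin_two, Matrix.one_apply]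
  fin_cases i <;> fin_cases j <;> simp <;> ring

lemma Pcomp (a : ℕ → ℕ) (n m₁ m₂ : ℕ) :
    Pmat a n (m₁ + m₂) = Pmat a (n + m₁) m₂ * Pmat a n m₁ := by
  induction m₂ with
  | zero => simp [Pmat]
  | succ m ih =>
      show Mmat a (n + (m₁ + m) + 1) * Pmat a n (m₁ + m)
        = (Mmat a (n + m₁ + m + 1) * Pmat a (n + m₁) m) * Pmat a n m₁
      have h : n + (m₁ + m) + 1 = n + m₁ + m + 1 := by omega
      rw [h, ih, Matrix.mul_assoc]

lemma detM (a : ℕ → ℕ) (n : ℕ) : (Mmat a n).det = -1 := by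
  simp [Mmat, Matrix.det_fin_two]

lemma Pone (a : ℕ → ℕ) (n : ℕ) : Pmat a n 1 = Mmat a (n + 1) := by
  show Mmat a (n + 0 + 1) * 1 = Mmat a (n + 1)
  rw [Matrix.mul_one]

/-- for an eventually periodic sequence of partial quotients `a`, the
generating function of any solution `r` of the recurrence `r n = a n · r (n−1) + r (n−2)`
(with arbitrary integer initial values) is rational. -/
theorem recurrence_generating_function_rational
    (a : ℕ → ℕ) (ha : ∀ j, 1 ≤ j → 1 ≤ a j)
    (ℓ k : ℕ) (hℓ : 1 ≤ ℓ)
    (hper : ∀ j, k < j → a (j + ℓ) = a j)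
    (r : ℕ → ℤ)
    (hr : ∀ n, 2 ≤ n → r n = (a n : ℤ) * r (n - 1) + r (n - 2)) :
    ∃ u v : Polynomial ℤ, v.coeff 0 = 1 ∧
      (v : PowerSeries ℤ) * PowerSeries.mk (fun n => r n) = (u : PowerSeries ℤ) := by
  classical
  -- the state vector
  set V : ℕ → (Fin 2 → ℤ) := fun n => ![r (n+1), r n] with hV
  have hVstep : ∀ n, V (n+1) = (Mmat a (n+2)).mulVec (V n) := by
    intro n
    funext i
    fin_cases i <;>
      simp [hV, Mmat, Matrix.mulVec, dotProduct, Fin.sum_univ_two]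
    · have := hr (n+2) (by omega)
      simpa using this
  have hViter : ∀ m n, V (n + m) = (Pmat a (n+1) m).mulVec (V n) := by
    intro m
    induction m with
    | zero => intro n; simp [Pmat]
    | succ m ih =>
        intro n
        have : n + (m + 1) = (n + m) + 1 := by omega
        rw [this, hVstep (n + m), ih n, Matrix.mulVec_mulVec]
        have h2 : n + m + 2 = n + 1 + m + 1 := by omega
        rw [h2]
        rfl
  -- periodicity of the products
  have hPper : ∀ n, k ≤ n → ∀ m, Pmat a (n + ℓ) m = Pmat a n m := by
    intro n hn m
    induction m with
    | zero => rfl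
    | succ m ih =>
        show Mmat a (n + ℓ + m + 1) * Pmat a (n + ℓ) m = Mmat a (n + m + 1) * Pmat a n m
        rw [ih]
        congr 1
        have h1 : n + ℓ + m + 1 = (n + m + 1) + ℓ := by omega
        rw [h1]
        unfold Mmat
        rw [hper (n + m + 1) (by omega)]
  -- commutation relation
  have hswap : ∀ n, k ≤ n →
      Pmat a (n+1) ℓ * Mmat a (n+1) = Mmat a (n+1) * Pmat a n ℓ := by
    intro n hn
    have h1 : Pmat a n (1 + ℓ) = Pmat a (n + 1) ℓ * Pmat a n 1 := Pcomp a n 1 ℓ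
    rw [Pone] at h1
    have h2 : Pmat a n (ℓ + 1) = Mmat a (n + ℓ + 1) * Pmat a n ℓ := rfl
    have h3 : Mmat a (n + ℓ + 1) = Mmat a (n + 1) := by
      have : n + ℓ + 1 = (n + 1) + ℓ := by omega
      rw [this]
      unfold Mmat
      rw [hper (n + 1) (by omega)]
    rw [h3] at h2
    rw [← h1, Nat.add_comm 1 ℓ, h2]
  -- trace and determinant are eventually constant
  have hMunit : ∀ n, IsUnit (Mmat a n).det := by
    intro n; rw [detM]; exact isUnit_one.neg
  have htr : ∀ n, k ≤ n → (Pmat a (n+1) ℓ).trace = (Pmat a n ℓ).trace := by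
    intro n hn
    set M := Mmat a (n+1) with hM
    have h1 : (Pmat a (n+1) ℓ).trace = (Pmat a (n+1) ℓ * (M * M⁻¹)).trace := by
      rw [Matrix.mul_nonsing_inv M (hMunit (n+1)), Matrix.mul_one]
    rw [h1, ← Matrix.mul_assoc, hswap n hn, Matrix.trace_mul_comm, ← Matrix.mul_assoc,
      Matrix.nonsing_inv_mul M (hMunit (n+1)), Matrix.one_mul]
  have hdet : ∀ n, k ≤ n → (Pmat a (n+1) ℓ).det = (Pmat a n ℓ).det := by
    intro n hn
    have h1 := congrArg Matrix.det (hswap n hn)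
    rw [Matrix.det_mul, Matrix.det_mul, detM] at h1
    nlinarith [h1]
  set T : ℤ := (Pmat a k ℓ).trace with hT
  set D : ℤ := (Pmat a k ℓ).det with hD
  have htrc : ∀ n, k ≤ n → (Pmat a n ℓ).trace = T := by
    intro n hn
    induction n, hn using Nat.le_induction with
    | base => rfl
    | succ n hn ih => rw [htr n hn, ih]
  have hdetc : ∀ n, k ≤ n → (Pmat a n ℓ).det = D := by
    intro n hn
    induction n, hn using Nat.le_induction with
    | base => rfl
    | succ n hn ih => rw [hdet n hn, ih]
  -- the constant–coefficient linear recurrence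
  have hrec : ∀ m, k ≤ m → r (m + 2*ℓ) = T * r (m + ℓ) - D * r m := by
    intro m hm
    have h1 : V (m + 2*ℓ) = (Pmat a (m+1) (2*ℓ)).mulVec (V m) := hViter (2*ℓ) m
    have h2 : Pmat a (m+1) (ℓ + ℓ) = Pmat a (m+1+ℓ) ℓ * Pmat a (m+1) ℓ := Pcomp a (m+1) ℓ ℓ
    have h3 : Pmat a (m+1+ℓ) ℓ = Pmat a (m+1) ℓ := hPper (m+1) (by omega) ℓ
    have h4 : Pmat a (m+1) (2*ℓ)
        = T • Pmat a (m+1) ℓ - D • (1 : Matrix (Fin 2) (Fin 2) ℤ) := by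
      have : 2*ℓ = ℓ + ℓ := by omega
      rw [this, h2, h3, cayley2, htrc (m+1) (by omega), hdetc (m+1) (by omega)]
    have h5 : V (m + ℓ) = (Pmat a (m+1) ℓ).mulVec (V m) := hViter ℓ m
    have h6 : V (m + 2*ℓ) = T • V (m + ℓ) - D • V m := by
      rw [h1, h4, Matrix.sub_mulVec, Matrix.smul_mulVec, Matrix.smul_mulVec,
        Matrix.one_mulVec, h5]
    have h7 := congrFun h6 1
    simpa [hV, smul_eq_mul, sub_eq_iff_eq_add] using h7
  -- the denominator polynomial
  set v : Polynomial ℤ :=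
    1 - Polynomial.C T * Polynomial.X ^ ℓ + Polynomial.C D * Polynomial.X ^ (2*ℓ) with hv
  have hℓ0 : ℓ ≠ 0 := by omega
  have h2ℓ0 : 2*ℓ ≠ 0 := by omega
  have hv0 : v.coeff 0 = 1 := by
    simp [hv, Polynomial.coeff_one, Polynomial.coeff_X_pow, Ne.symm hℓ0, Ne.symm h2ℓ0]
  set F : PowerSeries ℤ := PowerSeries.mk (fun n => r n) with hF
  have hvcoe : (v : PowerSeries ℤ)
      = 1 - PowerSeries.C T * PowerSeries.X ^ ℓ + PowerSeries.C D * PowerSeries.X ^ (2*ℓ) := by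
    simp only [hv, Polynomial.coe_add, Polynomial.coe_sub, Polynomial.coe_one,
      Polynomial.coe_mul, Polynomial.coe_pow, Polynomial.coe_C, Polynomial.coe_X]
  have hvanish : ∀ n, k + 2*ℓ ≤ n → PowerSeries.coeff n ((v : PowerSeries ℤ) * F) = 0 := by
    intro n hn
    obtain ⟨m, rfl⟩ : ∃ m, n = m + 2*ℓ := ⟨n - 2*ℓ, by omega⟩
    have hm : k ≤ m := by omega
    rw [hvcoe, add_mul, sub_mul, one_mul, map_add, map_sub, mul_assoc, mul_assoc,
      PowerSeries.coeff_C_mul, PowerSeries.coeff_C_mul]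
    have e1 : m + 2*ℓ = (m + ℓ) + ℓ := by omega
    have c1 : PowerSeries.coeff (m + 2*ℓ) (PowerSeries.X ^ ℓ * F) = r (m + ℓ) := by
      rw [e1, PowerSeries.coeff_X_pow_mul]
      simp [hF]
    have c2 : PowerSeries.coeff (m + 2*ℓ) (PowerSeries.X ^ (2*ℓ) * F) = r m := by
      rw [PowerSeries.coeff_X_pow_mul]
      simp [hF]
    rw [c1, c2]
    simp only [hF, PowerSeries.coeff_mk]
    rw [hrec m hm]
    ring
  refine ⟨PowerSeries.trunc (k + 2*ℓ) ((v : PowerSeries ℤ) * F), v, hv0, ?_⟩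
  ext n
  rw [Polynomial.coeff_coe, PowerSeries.coeff_trunc]
  by_cases h : n < k + 2*ℓ
  · simp [h]
  · rw [if_neg h, hvanish n (by omega)]
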